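/- arXiv:math/0306239 — 2 statements merged into one kernel-verified Lean document; each statement's English description precedes it below -/
import Mathlib

section
/- Let s, q, k > 0, let f be C¹, and φ : ℝ → ℝ nonnegative. With F(u,z) = f(u) − f(u₊) − s(u − u₊) − s q(z − 1) and G(u,z) = (k/s) φ(u) z, at any point with z > 0 and φ(u) > 0, the determinant det [[F, ∂F/∂s],[G, ∂G/∂s]] equals (−G/s)(2F − (f(u) − f(u₊))). Consequently, if in addition F ≤ 0 and f(u) > f(u₊), this determinant is strictly positive. -/
/-- Monotonicity in `s` \eqnref{deltas}: with `F(s,u,z) = f(u) − f(u₊) − s(u − u₊)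
− s q(z − 1)` and `G(s,u,z) = (k/s) φ(u) z`, at a point with `z > 0`, `φ(u) > 0`,
`det [[F, ∂F/∂s],[G, ∂G/∂s]] = (−G/s)(2F − (f(u) − f(u₊)))`; if moreover `F ≤ 0`
and `f(u) > f(u₊)`, this determinant is strictly positive. -/
theorem stmt_5 (s q k up : ℝ) (hs : 0 < s) (hq : 0 < q) (hk : 0 < k)
    (f : ℝ → ℝ) (hf : ContDiff ℝ 1 f)
    (φ : ℝ → ℝ) (hφ : ∀ u, 0 ≤ φ u)
    (F G : ℝ → ℝ → ℝ → ℝ)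
    (hF : ∀ s' u z, F s' u z = f u - f up - s' * (u - up) - s' * q * (z - 1))
    (hG : ∀ s' u z, G s' u z = (k / s') * φ u * z)
    (u z : ℝ) (hz : 0 < z) (hφu : 0 < φ u) :
    Matrix.det !![F s u z, deriv (fun s' : ℝ => F s' u z) s;
                  G s u z, deriv (fun s' : ℝ => G s' u z) s]
      = (-(G s u z) / s) * (2 * F s u z - (f u - f up)) ∧
    (F s u z ≤ 0 → f up < f u →
      0 < Matrix.det !![F s u z, deriv (fun s' : ℝ => F s' u z) s;
                        G s u z, deriv (fun s' : ℝ => G s' u z) s]) := by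
  have hs0 : s ≠ 0 := ne_of_gt hs
  have hdF : deriv (fun s' : ℝ => F s' u z) s = -(u - up) - q * (z - 1) := by
    have h : (fun s' : ℝ => F s' u z)
        = fun s' : ℝ => f u - f up - s' * (u - up) - s' * q * (z - 1) := by
      funext s'; exact hF s' u z
    rw [h]
    have : HasDerivAt (fun s' : ℝ => f u - f up - s' * (u - up) - s' * q * (z - 1))
        (-(u - up) - q * (z - 1)) s := by
      have h1 : HasDerivAt (fun s' : ℝ => s' * (u - up)) (u - up) s := by
        simpa using (hasDerivAt_id s).mul_const (u - up)
      have h2 : HasDerivAt (fun s' : ℝ => s' * q * (z - 1)) (q * (z - 1)) s := by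
        simpa using ((hasDerivAt_id s).mul_const q).mul_const (z - 1)
      exact (((hasDerivAt_const s (f u - f up)).sub h1).sub h2).congr_deriv (by ring)
    exact this.deriv
  have hdG : deriv (fun s' : ℝ => G s' u z) s = -(k / s ^ 2) * φ u * z := by
    have h : (fun s' : ℝ => G s' u z) = fun s' : ℝ => (k / s') * φ u * z := by
      funext s'; exact hG s' u z
    rw [h]
    have : HasDerivAt (fun s' : ℝ => (k / s') * φ u * z)
        (-(k / s ^ 2) * φ u * z) s := by
      have h1 : HasDerivAt (fun s' : ℝ => k / s') (-(k / s ^ 2)) s := by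
        have := (hasDerivAt_inv hs0).const_mul k
        simpa [div_eq_mul_inv, pow_two, mul_comm, mul_assoc, mul_left_comm] using this
      simpa using (h1.mul_const (φ u)).mul_const z
    exact this.deriv
  have hdet : Matrix.det !![F s u z, deriv (fun s' : ℝ => F s' u z) s;
                  G s u z, deriv (fun s' : ℝ => G s' u z) s]
      = (-(G s u z) / s) * (2 * F s u z - (f u - f up)) := by
    rw [Matrix.det_fin_two_of, hdF, hdG, hF, hG]
    field_simp
    ring
  refine ⟨hdet, fun hFle hflt => ?_⟩
  rw [hdet]
  have hGpos : 0 < G s u z := by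
    rw [hG]; positivity
  apply mul_pos_of_neg_of_neg
  · exact div_neg_of_neg_of_pos (neg_neg_iff_pos.mpr hGpos) hs
  · linarith
end

section
/- Let D : Ω → ℂ be analytic on an open connected set Ω ⊆ ℂ containing the closed right half-plane {Re λ ≥ 0}, satisfying the complex symmetry D(conj λ) = conj(D(λ)). Suppose D has finitely many zeros in {Re λ > 0}, all contained in a bounded set, that D(λ) ≠ 0 for real λ ≥ R, that D(0) = 0 with D'(0) ≠ 0, and D has no zeros on the imaginary axis other than 0. If sgn(D'(0) · D(R)) > 0 for large real R, then the number of zeros of D (counted with multiplicity) in {Re λ > 0} is even. -/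
open Complex Filter Topology

local notation "conj'" => starRingEnd ℂ

section Helpers

lemma hasDerivAt_conj_refl {f : ℂ → ℂ} {z f' : ℂ} (hf : HasDerivAt f f' (conj' z)) :
    HasDerivAt (fun w => conj' (f (conj' w))) (conj' f') z := by
  rw [hasDerivAt_iff_isLittleO] at hf ⊢
  rw [Asymptotics.isLittleO_iff] at hf ⊢
  intro c hc
  have hconj : Filter.Tendsto (fun w : ℂ => conj' w) (nhds z) (nhds (conj' z)) :=
    (Complex.continuous_conj.tendsto z)
  filter_upwards [hconj.eventually (hf hc)] with w hw
  have h1 : conj' (f (conj' w)) - conj' (f (conj' z)) - (w - z) • conj' f'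
      = conj' (f (conj' w) - f (conj' z) - (conj' w - conj' z) • f') := by
    simp only [smul_eq_mul, map_sub, map_mul, Complex.conj_conj]
  rw [h1, RCLike.norm_conj]
  have h2 : ‖conj' w - conj' z‖ = ‖w - z‖ := by rw [← map_sub, RCLike.norm_conj]
  rw [← h2]; exact hw

lemma analyticAt_conj_refl {f : ℂ → ℂ} {z : ℂ} (hf : AnalyticAt ℂ f (conj' z)) :
    AnalyticAt ℂ (fun w => conj' (f (conj' w))) z := by
  obtain ⟨U, hUo, hUm, hU⟩ : ∃ U : Set ℂ, IsOpen U ∧ conj' z ∈ U ∧ AnalyticOnNhd ℂ f U := by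
    have := hf.eventually_analyticAt
    rcases eventually_nhds_iff.mp this with ⟨U, h1, h2, h3⟩
    exact ⟨U, h2, h3, fun w hw => h1 w hw⟩
  have hpre : IsOpen ((fun w : ℂ => conj' w) ⁻¹' U) := hUo.preimage Complex.continuous_conj
  have : DifferentiableOn ℂ (fun w => conj' (f (conj' w))) ((fun w : ℂ => conj' w) ⁻¹' U) := by
    intro w hw
    exact (hasDerivAt_conj_refl
      ((hU _ hw).differentiableAt.hasDerivAt)).differentiableAt.differentiableWithinAt
  exact this.analyticAt (hpre.mem_nhds (by simpa using hUm))

lemma order_conj_refl {f : ℂ → ℂ} {z : ℂ} (hf : AnalyticAt ℂ f (conj' z))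
    (hg : AnalyticAt ℂ (fun w => conj' (f (conj' w))) z) :
    analyticOrderAt (fun w => conj' (f (conj' w))) z = analyticOrderAt f (conj' z) := by
  have hconj : Filter.Tendsto (fun w : ℂ => conj' w) (nhds z) (nhds (conj' z)) :=
    (Complex.continuous_conj.tendsto z)
  cases h : analyticOrderAt f (conj' z) with
  | top =>
      rw [analyticOrderAt_eq_top] at h
      rw [analyticOrderAt_eq_top]
      filter_upwards [hconj.eventually h] with w hw
      simp [hw]
  | coe n =>
      rw [hf.analyticOrderAt_eq_natCast] at h
      obtain ⟨h₁, ha, hne, hev⟩ := h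
      rw [hg.analyticOrderAt_eq_natCast]
      refine ⟨fun w => conj' (h₁ (conj' w)), analyticAt_conj_refl ha, by simpa using hne, ?_⟩
      filter_upwards [hconj.eventually hev] with w hw
      rw [hw]
      simp only [smul_eq_mul, map_mul, map_pow, map_sub, Complex.conj_conj]

/-- A local factorization of `f` at `a` with multiplicity `n`. -/
def FactorAt (f : ℂ → ℂ) (a : ℂ) (n : ℕ) : Prop :=
  ∃ h : ℂ → ℂ, AnalyticAt ℂ h a ∧ h a ≠ 0 ∧ ∀ᶠ z in 𝓝 a, f z = (z - a) ^ n * h z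

lemma eventuallyEq_nhds_of_punctured {f g : ℂ → ℂ} {a : ℂ}
    (hf : ContinuousAt f a) (hg : ContinuousAt g a) (h : f =ᶠ[𝓝[≠] a] g) :
    f =ᶠ[𝓝 a] g := by
  have hfa : f a = g a := by
    have h1 : Filter.Tendsto f (𝓝[≠] a) (𝓝 (f a)) := hf.tendsto.mono_left nhdsWithin_le_nhds
    have h2 : Filter.Tendsto g (𝓝[≠] a) (𝓝 (g a)) := hg.tendsto.mono_left nhdsWithin_le_nhds
    exact tendsto_nhds_unique (h1.congr' h) h2
  rw [← nhdsNE_sup_pure a]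
  rw [Filter.EventuallyEq, Filter.eventually_sup]
  exact ⟨h, by simpa [Filter.EventuallyEq] using hfa⟩

lemma analytic_div_sub {Ω : Set ℂ} {f : ℂ → ℂ}
    (hf : AnalyticOnNhd ℂ f Ω) {a : ℂ} (ha : a ∈ Ω) (hfa : f a = 0) :
    ∃ g : ℂ → ℂ, AnalyticOnNhd ℂ g Ω ∧ ∀ z, f z = (z - a) * g z := by
  refine ⟨dslope f a, ?_, fun z => ?_⟩
  · intro b hb
    rcases eq_or_ne b a with rfl | hba
    · rcases hf b hb with ⟨p, hp⟩
      exact (hp.has_fpower_series_dslope_fslope).analyticAt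
    · have h1 : AnalyticAt ℂ (fun z => (z - a)⁻¹ * (f z - f a)) b := by
        apply AnalyticAt.mul
        · exact ((analyticAt_id.sub analyticAt_const).inv (sub_ne_zero.mpr hba))
        · exact (hf b hb).sub analyticAt_const
      apply h1.congr
      filter_upwards [eventually_ne_nhds hba] with z hz
      rw [dslope_of_ne _ hz, slope_def_field, div_eq_inv_mul]
  · have := sub_smul_dslope f a z
    rw [hfa, sub_zero] at this
    rw [← this, smul_eq_mul]

lemma peel_pow {Ω : Set ℂ} {a : ℂ} (ha : a ∈ Ω) :
    ∀ (n : ℕ) (f : ℂ → ℂ), AnalyticOnNhd ℂ f Ω → FactorAt f a n →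
    ∃ g : ℂ → ℂ, AnalyticOnNhd ℂ g Ω ∧ ∀ z, f z = (z - a) ^ n * g z := by
  intro n
  induction n with
  | zero => exact fun f hf _ => ⟨f, hf, by simp⟩
  | succ n ih =>
      intro f hf hfact
      obtain ⟨h, hha, hh0, hev⟩ := hfact
      have hfa : f a = 0 := by
        have := hev.self_of_nhds
        simpa using this
      obtain ⟨g₁, hg₁, heq₁⟩ := analytic_div_sub hf ha hfa
      have hfact₁ : FactorAt g₁ a n := by
        refine ⟨h, hha, hh0, ?_⟩
        apply eventuallyEq_nhds_of_punctured (hg₁ a ha).continuousAt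
          (((analyticAt_id.sub analyticAt_const).pow n).mul hha).continuousAt
        have : ∀ᶠ z in 𝓝[≠] a, f z = (z - a) ^ (n+1) * h z :=
          hev.filter_mono nhdsWithin_le_nhds
        filter_upwards [this, self_mem_nhdsWithin] with z hz hza
        have hza' : z - a ≠ 0 := sub_ne_zero.mpr hza
        have h2 : (z - a) * g₁ z = (z - a) * ((z - a) ^ n * h z) := by
          rw [← heq₁ z, hz]; ring
        exact mul_left_cancel₀ hza' h2
      obtain ⟨g, hg, heq⟩ := ih g₁ hg₁ hfact₁
      refine ⟨g, hg, fun z => ?_⟩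
      rw [heq₁ z, heq z]; ring

lemma factorAt_of_factor {f f₁ : ℂ → ℂ} {a b : ℂ} {n k : ℕ} (hb : b ≠ a)
    (hfact : FactorAt f a n)
    (heq : ∀ z, f z = (z - b) ^ k * f₁ z) : FactorAt f₁ a n := by
  obtain ⟨h, hha, hh0, hev⟩ := hfact
  have hba : (a - b) ^ k ≠ 0 := pow_ne_zero _ (sub_ne_zero.mpr (Ne.symm hb))
  refine ⟨fun z => ((z - b) ^ k)⁻¹ * h z,
    (((analyticAt_id.sub analyticAt_const).pow k).inv hba).mul hha,
    by simpa using mul_ne_zero (inv_ne_zero hba) hh0, ?_⟩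
  filter_upwards [hev, eventually_ne_nhds (Ne.symm hb)] with z hz hzb
  have hzb' : (z - b) ^ k ≠ 0 := pow_ne_zero _ (sub_ne_zero.mpr hzb)
  field_simp
  rw [← hz, heq z]; ring

lemma peel_finset {Ω : Set ℂ} (m : ℂ → ℕ) :
    ∀ (F : Finset ℂ), (↑F ⊆ Ω) → ∀ (f : ℂ → ℂ), AnalyticOnNhd ℂ f Ω →
    (∀ w ∈ F, FactorAt f w (m w)) →
    ∃ g : ℂ → ℂ, AnalyticOnNhd ℂ g Ω ∧ ∀ z, f z = (∏ w ∈ F, (z - w) ^ m w) * g z := by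
  intro F
  induction F using Finset.induction_on with
  | empty => exact fun _ f hf _ => ⟨f, hf, by simp⟩
  | @insert a F haF ih =>
      intro hsub f hf hfact
      have haΩ : a ∈ Ω := hsub (by simp)
      obtain ⟨g₁, hg₁, heq₁⟩ := peel_pow haΩ (m a) f hf (hfact a (by simp))
      have hfact₁ : ∀ w ∈ F, FactorAt g₁ w (m w) := by
        intro w hw
        have hwa : a ≠ w := fun h => haF (h ▸ hw)
        exact factorAt_of_factor hwa (hfact w (by simp [hw])) heq₁
      obtain ⟨g, hg, heq⟩ := ih (fun w hw => hsub (by simp [hw])) g₁ hg₁ hfact₁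
      refine ⟨g, hg, fun z => ?_⟩
      rw [heq₁ z, heq z, Finset.prod_insert haF]; ring

lemma prod_conj_pos (m : ℂ → ℕ) :
    ∀ (F : Finset ℂ), (∀ w ∈ F, conj' w ∈ F) → (∀ w ∈ F, m (conj' w) = m w) →
    (∀ w ∈ F, 0 < w.re) →
    ∃ r : ℝ, 0 < r ∧ ∏ w ∈ F, w ^ m w = (r : ℂ) := by
  intro F
  induction F using Finset.strongInduction with
  | _ F ih =>
    rcases F.eq_empty_or_nonempty with rfl | ⟨a, haF⟩
    · exact fun _ _ _ => ⟨1, one_pos, by simp⟩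
    intro hconj hm hre
    rcases eq_or_ne a.im 0 with him | him
    · have ha : a = ((a.re : ℝ) : ℂ) := Complex.ext (by simp) (by simp [him])
      have hre' : (0:ℝ) < a.re := hre a haF
      have hFa : ∀ w ∈ F.erase a, conj' w ∈ F.erase a := by
        intro w hw
        rw [Finset.mem_erase] at hw ⊢
        refine ⟨fun h => hw.1 ?_, hconj w hw.2⟩
        have := congrArg conj' h
        rw [Complex.conj_conj] at this
        rw [this, ← ha.symm]
        rw [ha]; exact (Complex.conj_ofReal _)
      obtain ⟨r, hr, hprod⟩ := ih (F.erase a) (Finset.erase_ssubset haF)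
        hFa (fun w hw => hm w (Finset.mem_erase.mp hw).2)
        (fun w hw => hre w (Finset.mem_erase.mp hw).2)
      refine ⟨a.re ^ m a * r, by positivity, ?_⟩
      rw [← Finset.mul_prod_erase F _ haF, hprod]
      have hpow : a ^ m a = ((a.re : ℝ) : ℂ) ^ m a := congrArg (fun x => x ^ m a) ha
      rw [hpow]
      push_cast
      ring
    · have hcaF : conj' a ∈ F := hconj a haF
      have hca : conj' a ≠ a := by
        intro h
        rw [Complex.conj_eq_iff_im] at h
        exact him h
      have hcaF' : conj' a ∈ F.erase a := Finset.mem_erase.mpr ⟨hca, hcaF⟩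
      set F₂ := (F.erase a).erase (conj' a) with hF₂
      have hF₂sub : F₂ ⊂ F := by
        refine Finset.ssubset_iff_of_subset ?_ |>.mpr ⟨a, haF, ?_⟩
        · exact (Finset.erase_subset _ _).trans (Finset.erase_subset _ _)
        · simp [hF₂, Finset.mem_erase]
      have hF₂conj : ∀ w ∈ F₂, conj' w ∈ F₂ := by
        intro w hw
        simp only [hF₂, Finset.mem_erase] at hw ⊢
        refine ⟨?_, ?_, hconj w hw.2.2⟩
        · intro h; apply hw.2.1
          have := congrArg conj' h
          rwa [Complex.conj_conj, Complex.conj_conj] at this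
        · intro h; apply hw.1
          have := congrArg conj' h
          rwa [Complex.conj_conj] at this
      obtain ⟨r, hr, hprod⟩ := ih F₂ hF₂sub hF₂conj
        (fun w hw => hm w (Finset.mem_erase.mp (Finset.mem_erase.mp hw).2).2)
        (fun w hw => hre w (Finset.mem_erase.mp (Finset.mem_erase.mp hw).2).2)
      have ha0 : a ≠ 0 := fun h => by simp [h] at him
      refine ⟨(Complex.normSq a) ^ m a * r, ?_, ?_⟩
      · have : 0 < Complex.normSq a := Complex.normSq_pos.mpr ha0
        positivity
      · rw [← Finset.mul_prod_erase F _ haF, ← Finset.mul_prod_erase _ _ hcaF', hprod,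
          hm a haF]
        calc a ^ m a * ((conj' a) ^ m a * (r:ℂ))
            = (a * conj' a) ^ m a * r := by rw [mul_pow]; ring
          _ = ((Complex.normSq a : ℝ) : ℂ) ^ m a * r := by rw [Complex.mul_conj]
          _ = ((Complex.normSq a ^ m a * r : ℝ) : ℂ) := by push_cast; ring

end Helpers

/-- Parity argument for the stability index: let `D` be analytic on an open connected
set `Ω` containing the closed right half-plane, with conjugate symmetry, finitely many
zeros in the open right half-plane, no zeros for large real `λ`, a simple zero at `0`,
no other zeros on the imaginary axis; if `D'(0)·D(R) > 0` for all large real `R`, then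
the number of zeros of `D` in `{Re λ > 0}`, counted with multiplicity, is even. -/
theorem stmt_15 (Ω : Set ℂ) (hΩo : IsOpen Ω) (hΩc : IsConnected Ω)
    (hsub : {z : ℂ | 0 ≤ z.re} ⊆ Ω)
    (D : ℂ → ℂ) (hD : AnalyticOnNhd ℂ D Ω)
    (hsym : ∀ z : ℂ, D (starRingEnd ℂ z) = starRingEnd ℂ (D z))
    (hfin : {z : ℂ | 0 < z.re ∧ D z = 0}.Finite)
    (R₀ : ℝ) (hR₀ : ∀ R : ℝ, R₀ ≤ R → D (R : ℂ) ≠ 0)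
    (h0 : D 0 = 0) (h0' : deriv D 0 ≠ 0)
    (himag : ∀ t : ℝ, t ≠ 0 → D (Complex.I * t) ≠ 0)
    (hsgn : ∃ R₁ : ℝ, ∀ R : ℝ, R₁ ≤ R → 0 < (deriv D 0 * D (R : ℂ)).re) :
    Even (∑ z ∈ hfin.toFinset.attach,
      ((analyticOrderAt D z.1).toNat)) := by
  classical
  obtain ⟨R₁, hR₁⟩ := hsgn
  set Fs := hfin.toFinset with hFs
  have hmemS : ∀ w ∈ Fs, 0 < w.re ∧ D w = 0 := fun w hw => hfin.mem_toFinset.mp hw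
  have hmemΩ : ∀ w ∈ Fs, w ∈ Ω := fun w hw => hsub (le_of_lt (hmemS w hw).1)
  set m : ℂ → ℕ := fun w => if h : AnalyticAt ℂ D w then (analyticOrderAt D w).toNat else 0 with hm_def
  have hm_eq : ∀ (w : ℂ) (hw : AnalyticAt ℂ D w), m w = (analyticOrderAt D w).toNat := by
    intro w hw
    simp only [hm_def, dif_pos hw]
  -- order is finite everywhere on Ω
  have h_ne_top : ∀ (w : ℂ) (hw : w ∈ Ω), analyticOrderAt D w ≠ ⊤ := by
    intro w hw htop
    rw [analyticOrderAt_eq_top] at htop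
    have : Set.EqOn D 0 Ω :=
      hD.eqOn_zero_of_preconnected_of_eventuallyEq_zero hΩc.isPreconnected hw htop
    have hmem : ((max R₀ 0 : ℝ) : ℂ) ∈ Ω := hsub (by simp [le_max_right])
    exact hR₀ (max R₀ 0) (le_max_left _ _) (this hmem)
  have horder : ∀ (w : ℂ) (hw : w ∈ Ω), analyticOrderAt D w = (m w : ℕ∞) := by
    intro w hw
    rw [hm_eq w (hD w hw)]
    exact (ENat.coe_toNat (h_ne_top w hw)).symm
  -- local factorizations at the zeros
  have hfact : ∀ w ∈ Fs, FactorAt D w (m w) := by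
    intro w hw
    have := (hD w (hmemΩ w hw)).analyticOrderAt_eq_natCast.mp (horder w (hmemΩ w hw))
    obtain ⟨h, hh, hh0, hev⟩ := this
    exact ⟨h, hh, hh0, by filter_upwards [hev] with z hz; rw [hz, smul_eq_mul]⟩
  -- peel off the zero at 0
  obtain ⟨g₀, hg₀, heq₀⟩ := analytic_div_sub hD (hsub (by simp)) h0
  have heq₀' : ∀ z, D z = (z - 0) ^ 1 * g₀ z := fun z => by rw [heq₀ z]; ring
  have hfact₀ : ∀ w ∈ Fs, FactorAt g₀ w (m w) := by
    intro w hw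
    have hw0 : (0:ℂ) ≠ w := fun h => by
      have := (hmemS w hw).1
      rw [← h] at this
      simp at this
    exact factorAt_of_factor hw0 (hfact w hw) heq₀'
  -- peel off the zeros in the right half plane
  obtain ⟨g, hg, heqg⟩ := peel_finset m Fs (fun w hw => hmemΩ w (by exact hw)) g₀ hg₀ hfact₀
  set P : ℂ → ℂ := fun z => ∏ w ∈ Fs, (z - w) ^ m w with hP_def
  have hDfull : ∀ z, D z = z * (P z * g z) := by
    intro z
    rw [heq₀ z, heqg z, hP_def]
    ring
  have hPan : ∀ z : ℂ, AnalyticAt ℂ P z := by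
    intro z
    exact Finset.analyticAt_fun_prod Fs
      (fun w _ => (analyticAt_id.sub analyticAt_const).pow (m w))
  -- the derivative at 0
  have hderiv : deriv D 0 = P 0 * g 0 := by
    have hDfun : D = fun z => z * (P z * g z) := funext hDfull
    have h1 : HasDerivAt (fun z : ℂ => z * (P z * g z)) (P 0 * g 0) 0 := by
      have h2 : HasDerivAt (fun z : ℂ => P z * g z)
          (deriv (fun z : ℂ => P z * g z) 0) 0 :=
        (((hPan 0).mul (hg 0 (hsub (by simp)))).differentiableAt).hasDerivAt
      have := (hasDerivAt_id (0:ℂ)).fun_mul h2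
      simpa using this
    rw [hDfun]
    exact h1.deriv
  have hP0 : P 0 ≠ 0 := fun h => h0' (by rw [hderiv, h, zero_mul])
  have hg0 : g 0 ≠ 0 := fun h => h0' (by rw [hderiv, h, mul_zero])
  -- g does not vanish on the closed right half-plane
  have hgne : ∀ z : ℂ, 0 ≤ z.re → g z ≠ 0 := by
    intro z hz hgz
    rcases eq_or_ne (D z) 0 with hDz | hDz
    · rcases lt_or_eq_of_le hz with hlt | heqre
      · -- z is a zero in the open right half-plane
        have hzFs : z ∈ Fs := hfin.mem_toFinset.mpr ⟨hlt, hDz⟩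
        obtain ⟨h, hh, hh0, hev⟩ := hfact z hzFs
        set q : ℂ → ℂ := fun u => u * ((∏ w ∈ Fs.erase z, (u - w) ^ m w) * g u) with hq_def
        have hqfact : ∀ u, D u = (u - z) ^ m z * q u := by
          intro u
          simp only [hDfull u, hq_def, hP_def]
          rw [← Finset.mul_prod_erase Fs (fun w => (u - w) ^ m w) hzFs]
          ring
        have hqan : ContinuousAt q z := by
          have : AnalyticAt ℂ q z := by
            apply analyticAt_id.mul
            apply AnalyticAt.mul
            · exact Finset.analyticAt_fun_prod _
                (fun w _ => (analyticAt_id.sub analyticAt_const).pow (m w))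
            · exact hg z (hmemΩ z hzFs)
          exact this.continuousAt
        have hqh : q =ᶠ[𝓝 z] h := by
          apply eventuallyEq_nhds_of_punctured hqan hh.continuousAt
          have hev' : ∀ᶠ u in 𝓝[≠] z, D u = (u - z) ^ m z * h u :=
            hev.filter_mono nhdsWithin_le_nhds
          filter_upwards [hev', self_mem_nhdsWithin] with u hu huz
          have : (u - z) ^ m z ≠ 0 := pow_ne_zero _ (sub_ne_zero.mpr huz)
          apply mul_left_cancel₀ this
          rw [← hu, hqfact u]
        have : q z = h z := hqh.self_of_nhds
        rw [hq_def] at this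
        simp only [hgz, mul_zero] at this
        exact hh0 this.symm
      · -- z on the imaginary axis
        rcases eq_or_ne z.im 0 with him | him
        · have : z = 0 := Complex.ext (by simp [← heqre]) (by simp [him])
          rw [this] at hgz
          exact hg0 hgz
        · have : z = Complex.I * (z.im : ℝ) := Complex.ext (by simp [← heqre]) (by simp)
          exact himag z.im him (by rw [← this]; exact hDz)
    · exact hDz (by rw [hDfull z, hgz]; ring)
  -- multiplicities are positive on Fs
  have hm_pos : ∀ w ∈ Fs, m w ≠ 0 := by
    intro w hw hmw
    obtain ⟨h, hh, hh0, hev⟩ := hfact w hw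
    rw [hmw] at hev
    have := hev.self_of_nhds
    simp only [pow_zero, one_mul] at this
    exact hh0 (by rw [← this]; exact (hmemS w hw).2)
  -- Fs is stable under conjugation
  have hconjFs : ∀ w ∈ Fs, conj' w ∈ Fs := by
    intro w hw
    obtain ⟨h1, h2⟩ := hmemS w hw
    refine hfin.mem_toFinset.mpr ⟨by simpa using h1, ?_⟩
    rw [hsym w, h2, map_zero]
  -- multiplicities are conjugation-invariant
  have hmc : ∀ w ∈ Fs, m (conj' w) = m w := by
    intro w hw
    have hwΩ := hmemΩ w hw
    have hcΩ : conj' w ∈ Ω := hmemΩ _ (hconjFs w hw)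
    have hrefl : AnalyticAt ℂ (fun u => conj' (D (conj' u))) w :=
      analyticAt_conj_refl (hD _ hcΩ)
    have key : analyticOrderAt (fun u => conj' (D (conj' u))) w = analyticOrderAt D (conj' w) := order_conj_refl (hD _ hcΩ) hrefl
    have hfun : (fun u => conj' (D (conj' u))) = D :=
      funext fun u => by rw [hsym u, Complex.conj_conj]
    have key2 : ∀ (F : ℂ → ℂ) (hF : AnalyticAt ℂ F w), F = D → analyticOrderAt F w = analyticOrderAt D w := by
      rintro F hF rfl; rfl
    rw [hm_eq _ (hD _ hcΩ), hm_eq _ (hD _ hwΩ), ← key, key2 _ hrefl hfun]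
  -- D is real on the real axis
  have hDreal : ∀ t : ℝ, conj' (D t) = D t := by
    intro t
    calc conj' (D t) = D (conj' (t:ℂ)) := (hsym t).symm
      _ = D t := by rw [Complex.conj_ofReal]
  -- P is real on the real axis
  have hPreal : ∀ t : ℝ, conj' (P (t:ℂ)) = P t := by
    intro t
    simp only [hP_def]
    rw [map_prod]
    have hterm : ∀ w, conj' (((t:ℂ) - w) ^ m w) = ((t:ℂ) - conj' w) ^ m w := by
      intro w
      rw [map_pow, map_sub, Complex.conj_ofReal]
    calc ∏ w ∈ Fs, conj' (((t:ℂ) - w) ^ m w)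
        = ∏ w ∈ Fs, ((t:ℂ) - conj' w) ^ m w := Finset.prod_congr rfl fun w _ => hterm w
      _ = ∏ w ∈ Fs, ((t:ℂ) - w) ^ m w := by
          apply Finset.prod_bij' (fun w _ => conj' w) (fun w _ => conj' w)
          · intro w hw; exact hconjFs w hw
          · intro w hw; exact hconjFs w hw
          · intro w _; exact Complex.conj_conj w
          · intro w _; exact Complex.conj_conj w
          · intro w hw
            rw [hmc w hw]
  -- g is real on the nonnegative real axis
  have hgood : ∀ t : ℝ, (t:ℂ) * P t ≠ 0 → conj' (g t) = g t := by
    intro t hne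
    have h1 := hDreal t
    rw [hDfull (t:ℂ), map_mul, map_mul, Complex.conj_ofReal, hPreal t] at h1
    have htne : (t:ℂ) ≠ 0 := left_ne_zero_of_mul hne
    have hpne : P (t:ℂ) ≠ 0 := right_ne_zero_of_mul hne
    exact mul_left_cancel₀ hpne (mul_left_cancel₀ htne h1)
  have hgreal : ∀ t : ℝ, 0 ≤ t → conj' (g t) = g t := by
    intro t ht
    by_cases hne : (t:ℂ) * P t ≠ 0
    · exact hgood t hne
    push_neg at hne
    set u : ℕ → ℝ := fun n => t + ((n:ℝ) + 1)⁻¹ with hu_def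
    have hu_tendR : Tendsto u atTop (𝓝 t) := by
      have := tendsto_one_div_add_atTop_nhds_zero_nat (𝕜 := ℝ)
      have h2 := tendsto_const_nhds (x := t) (f := atTop (α := ℕ)) |>.add this
      simpa using h2
    have hu_tend : Tendsto (fun n => ((u n : ℝ) : ℂ)) atTop (𝓝 (t:ℂ)) :=
      (Complex.continuous_ofReal.tendsto t).comp hu_tendR
    have hZfin : {z : ℂ | z * P z = 0}.Finite := by
      apply Set.Finite.subset (Set.Finite.insert 0 (Fs.finite_toSet))
      intro z hz
      rcases mul_eq_zero.mp hz with h | h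
      · exact Set.mem_insert_iff.mpr (Or.inl h)
      · simp only [hP_def] at h
        obtain ⟨w, hwFs, hpow⟩ := Finset.prod_eq_zero_iff.mp h
        have : z - w = 0 := pow_eq_zero_iff (hm_pos w hwFs) |>.mp hpow
        exact Set.mem_insert_iff.mpr (Or.inr (by rw [sub_eq_zero.mp this]; exact hwFs))
    have hinj : Function.Injective (fun n : ℕ => ((u n : ℝ) : ℂ)) := by
      intro a b hab
      have h1 : u a = u b := Complex.ofReal_inj.mp hab
      simp only [hu_def] at h1
      have h2 : ((a:ℝ) + 1)⁻¹ = ((b:ℝ) + 1)⁻¹ := by linarith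
      have h3 : ((a:ℝ) + 1) = ((b:ℝ) + 1) := inv_inj.mp h2
      have h4 : (a:ℝ) = (b:ℝ) := by linarith
      exact_mod_cast h4
    have hbadfin : {n : ℕ | ((u n : ℝ):ℂ) * P (u n) = 0}.Finite := by
      apply Set.Finite.preimage (hinj.injOn) hZfin
    have hev : ∀ᶠ n in atTop, conj' (g (u n)) = g (u n) := by
      rw [← Nat.cofinite_eq_atTop]
      filter_upwards [hbadfin.eventually_cofinite_notMem] with n hn
      exact hgood (u n) hn
    have hcont : ContinuousAt g (t:ℂ) :=
      (hg _ (hsub (by simp [ht]))).continuousAt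
    have h1 : Tendsto (fun n => conj' (g (u n))) atTop (𝓝 (conj' (g t))) :=
      (Complex.continuous_conj.tendsto _).comp (hcont.tendsto.comp hu_tend)
    have h2 : Tendsto (fun n => g (u n)) atTop (𝓝 (g t)) := hcont.tendsto.comp hu_tend
    exact tendsto_nhds_unique (h1.congr' hev) h2
  -- positivity of P at +infinity
  set N := ∑ w ∈ Fs, m w with hN_def
  have hPinf : ∀ᶠ t : ℝ in atTop, 0 < (P t).re := by
    have base : Tendsto (fun t : ℝ => ((t⁻¹ : ℝ) : ℂ)) atTop (𝓝 0) := by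
      have h1 := tendsto_inv_atTop_zero (𝕜 := ℝ)
      have h2 := (Complex.continuous_ofReal.tendsto 0).comp h1
      simpa only [Function.comp_def, Complex.ofReal_zero] using h2
    have hprod : Tendsto (fun t : ℝ => ∏ w ∈ Fs, ((1:ℂ) - w * ((t⁻¹ : ℝ):ℂ)) ^ m w) atTop
        (𝓝 (∏ _w ∈ Fs, (1:ℂ))) := by
      apply tendsto_finset_prod
      intro w _
      have h3 : Tendsto (fun t : ℝ => (1:ℂ) - w * ((t⁻¹ : ℝ):ℂ)) atTop (𝓝 1) := by
        have := (tendsto_const_nhds (x := (1:ℂ)) (f := atTop (α := ℝ))).sub (base.const_mul w)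
        simpa using this
      simpa using h3.pow (m w)
    have hre : Tendsto (fun t : ℝ => (∏ w ∈ Fs, ((1:ℂ) - w * ((t⁻¹ : ℝ):ℂ)) ^ m w).re) atTop
        (𝓝 1) := by
      have := (Complex.continuous_re.tendsto _).comp hprod
      simpa [Function.comp_def] using this
    have hhalf : ∀ᶠ t : ℝ in atTop,
        1/2 < (∏ w ∈ Fs, ((1:ℂ) - w * ((t⁻¹ : ℝ):ℂ)) ^ m w).re :=
      hre.eventually (eventually_gt_nhds (by norm_num))
    filter_upwards [hhalf, eventually_gt_atTop 0] with t ht ht0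
    have htne : (t:ℂ) ≠ 0 := by exact_mod_cast ne_of_gt ht0
    have hPt : P t = (((t^N : ℝ)):ℂ) * ∏ w ∈ Fs, ((1:ℂ) - w * ((t⁻¹ : ℝ):ℂ)) ^ m w := by
      simp only [hP_def]
      push_cast
      rw [← Finset.prod_pow_eq_pow_sum, ← Finset.prod_mul_distrib]
      apply Finset.prod_congr rfl
      intro w _
      rw [← mul_pow]
      congr 1
      field_simp
    rw [hPt, Complex.re_ofReal_mul]
    exact mul_pos (pow_pos ht0 N) (lt_trans (by norm_num) ht)
  -- choose a large real evaluation point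
  obtain ⟨R₂, hR₂⟩ := eventually_atTop.mp hPinf
  set Rb : ℝ := max (max R₀ R₁) (max R₂ 1) with hRb_def
  have hRb0 : (0:ℝ) < Rb := lt_of_lt_of_le one_pos ((le_max_right R₂ 1).trans (le_max_right _ _))
  have hPRb : 0 < (P Rb).re := hR₂ Rb ((le_max_left R₂ 1).trans (le_max_right _ _))
  have hsgnRb : 0 < (deriv D 0 * D Rb).re :=
    hR₁ Rb ((le_max_right R₀ R₁).trans (le_max_left _ _))
  -- realness of the various quantities
  have hrealize : ∀ z : ℂ, conj' z = z → z = ((z.re : ℝ) : ℂ) := by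
    intro z h
    exact Complex.ext rfl (by simpa using (Complex.conj_eq_iff_im.mp h))
  obtain ⟨p0, hP0eq⟩ : ∃ p0 : ℝ, P 0 = (p0 : ℂ) :=
    ⟨(P 0).re, hrealize _ (by simpa using hPreal 0)⟩
  obtain ⟨pR, hPRbeq⟩ : ∃ pR : ℝ, P (Rb:ℂ) = (pR : ℂ) := ⟨_, hrealize _ (hPreal Rb)⟩
  obtain ⟨g0r, hg0eq⟩ : ∃ g0r : ℝ, g 0 = (g0r : ℂ) :=
    ⟨(g 0).re, hrealize _ (by simpa using hgreal 0 le_rfl)⟩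
  obtain ⟨gRr, hgRbeq⟩ : ∃ gRr : ℝ, g (Rb:ℂ) = (gRr : ℂ) := ⟨_, hrealize _ (hgreal Rb hRb0.le)⟩
  have hpR' : 0 < pR := by rw [hPRbeq] at hPRb; simpa using hPRb
  -- intermediate value: re g has constant sign on [0, Rb]
  have hmemIcc : ∀ t : ℝ, t ∈ Set.uIcc (0:ℝ) Rb → 0 ≤ t := by
    intro t ht
    rw [Set.uIcc_of_le hRb0.le] at ht
    exact ht.1
  have hune : ∀ t ∈ Set.uIcc (0:ℝ) Rb, (g (t:ℂ)).re ≠ 0 := by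
    intro t ht hre0
    have h1 : g (t:ℂ) = 0 := by
      rw [hrealize _ (hgreal t (hmemIcc t ht)), hre0]
      simp
    exact hgne (t:ℂ) (by simp [hmemIcc t ht]) h1
  have hcontu : ContinuousOn (fun t : ℝ => (g (t:ℂ)).re) (Set.uIcc (0:ℝ) Rb) := by
    apply Complex.continuous_re.comp_continuousOn
    apply (hg.continuousOn).comp Complex.continuous_ofReal.continuousOn
    intro t ht
    exact hsub (by simp [hmemIcc t ht])
  have hgsign : 0 < g0r * gRr := by
    have hre0 : (g ((0:ℝ):ℂ)).re = g0r := by rw [show ((0:ℝ):ℂ) = 0 by norm_num, hg0eq]; simp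
    have hreR : (g ((Rb:ℝ):ℂ)).re = gRr := by rw [hgRbeq]; simp
    rw [← hre0, ← hreR]
    by_contra hle
    push_neg at hle
    have h00 : (g ((0:ℝ):ℂ)).re ≠ 0 := hune 0 Set.left_mem_uIcc
    have hRR : (g ((Rb:ℝ):ℂ)).re ≠ 0 := hune Rb Set.right_mem_uIcc
    have h0mem : (0:ℝ) ∈ Set.uIcc ((g ((0:ℝ):ℂ)).re) ((g ((Rb:ℝ):ℂ)).re) := by
      rw [Set.mem_uIcc]
      rcases le_or_gt ((g ((0:ℝ):ℂ)).re) 0 with h | h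
      · left
        refine ⟨h, ?_⟩
        nlinarith [lt_of_le_of_ne h h00]
      · right
        refine ⟨?_, h.le⟩
        nlinarith
    obtain ⟨c, hc, hc0⟩ := intermediate_value_uIcc hcontu h0mem
    exact hune c hc hc0
  -- assemble the sign computation
  have e1 : deriv D 0 * D Rb = (((p0 * g0r) * (Rb * (pR * gRr)) : ℝ) : ℂ) := by
    rw [hderiv, hDfull (Rb:ℂ), hP0eq, hg0eq, hPRbeq, hgRbeq]
    push_cast
    ring
  rw [e1, Complex.ofReal_re] at hsgnRb
  have hp0 : 0 < p0 := by
    by_contra hc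
    push_neg at hc
    nlinarith [mul_pos (mul_pos hRb0 hpR') hgsign]
  -- the parity conclusion
  obtain ⟨r, hr, hprodr⟩ := prod_conj_pos m Fs hconjFs hmc (fun w hw => (hmemS w hw).1)
  have hP0val : P 0 = (-1:ℂ)^N * r := by
    simp only [hP_def]
    have : ∀ w ∈ Fs, ((0:ℂ) - w) ^ m w = (-1:ℂ)^ m w * w ^ m w := by
      intro w _
      rw [zero_sub, show -w = (-1:ℂ) * w by ring, mul_pow]
    rw [Finset.prod_congr rfl this, Finset.prod_mul_distrib,
      Finset.prod_pow_eq_pow_sum, hprodr, hN_def]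
  have hsum : (∑ z ∈ hfin.toFinset.attach,
      ((analyticOrderAt D z.1).toNat)) = N := by
    rw [hN_def, ← Finset.sum_attach Fs m]
    apply Finset.sum_congr rfl
    intro z _
    exact (hm_eq z.1 (hD z.1 (hmemΩ z.1 z.2))).symm
  rw [hsum]
  by_contra hodd
  rw [← Nat.not_odd_iff_even, not_not] at hodd
  rw [hodd.neg_one_pow] at hP0val
  rw [hP0eq] at hP0val
  have : (p0 : ℂ) = ((-r : ℝ) : ℂ) := by rw [hP0val]; push_cast; ring
  have hp0r : p0 = -r := Complex.ofReal_inj.mp this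
  linarith
end
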